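/- The number of triples (P₁,P₂,P₃) of pairwise non-intersecting upright lattice paths in ℤ², with P₁ from (−1,1) to (i−1,j+1), P₂ from (0,0) to (i,j), and P₃ from (1,−1) to (i+1,j−1), equals 2·(i+j)!·(i+j+1)!·(i+j+2)! / (i!·(i+1)!·(i+2)!·j!·(j+1)!·(j+2)!), for all natural numbers i, j. -/

import Mathlib

/-- The set of lattice points visited by the upright path starting at `A`
with step word `w` (`false` = right step, `true` = up step). -/
def visited (A : ℤ × ℤ) (w : List Bool) : Set (ℤ × ℤ) :=
  {p | ∃ t ≤ w.length,
    p = (A.1 + ((w.take t).count false : ℤ), A.2 + ((w.take t).count true : ℤ))}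

namespace LGV3

/-- running count of right (`false`) steps after `t` steps -/
def rr (w : List Bool) (t : ℕ) : ℕ := (w.take t).count false

/-- decrement for a step: a right step (`false`) contributes 1 to the false-count -/
def dB (b : Bool) : ℤ := if b then 0 else 1

def c (n : ℕ) (k : ℤ) : ℤ := if 0 ≤ k then (n.choose k.toNat : ℤ) else 0

def D (n : ℕ) (x : ℤ × ℤ × ℤ) : ℤ :=
  c n x.1 * (c n x.2.1 * c n x.2.2 - c n (x.2.2+1) * c n (x.2.1-1))
  - c n (x.2.1+1) * (c n (x.1-1) * c n x.2.2 - c n (x.2.2+1) * c n (x.1-2))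
  + c n (x.2.2+2) * (c n (x.1-1) * c n (x.2.1-1) - c n x.2.1 * c n (x.1-2))

def Nested (w₁ w₂ w₃ : List Bool) : Prop :=
  ∀ t, rr w₁ t ≤ rr w₂ t ∧ rr w₂ t ≤ rr w₃ t

def T : ℕ → ℤ × ℤ × ℤ → Finset (List Bool × List Bool × List Bool)
  | 0, x => if x = (0,0,0) then {([],[],[])} else ∅
  | n+1, x => if x.1 ≤ x.2.1 ∧ x.2.1 ≤ x.2.2 then
      Finset.univ.biUnion (fun b : Bool × Bool × Bool =>
        (T n (x.1 - dB b.1, x.2.1 - dB b.2.1, x.2.2 - dB b.2.2)).image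
          (fun w => (w.1.concat b.1, w.2.1.concat b.2.1, w.2.2.concat b.2.2)))
    else ∅

lemma count_false_add_count_true (l : List Bool) : l.count false + l.count true = l.length := by
  induction l with
  | nil => simp
  | cons a l ih => cases a <;> simp [List.count_cons] <;> omega

lemma rr_zero (w : List Bool) : rr w 0 = 0 := by simp [rr]

lemma rr_of_length_le {w : List Bool} {t : ℕ} (h : w.length ≤ t) :
    rr w t = w.count false := by simp [rr, List.take_of_length_le h]

lemma rr_le_succ (w : List Bool) (t : ℕ) : rr w t ≤ rr w (t+1) := by
  simp only [rr, List.take_succ, List.count_append]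
  omega

lemma rr_succ_le (w : List Bool) (t : ℕ) : rr w (t+1) ≤ rr w t + 1 := by
  simp only [rr, List.take_succ, List.count_append]
  have : (w[t]?.toList).count false ≤ 1 := by
    cases h : w[t]? <;> simp [List.count_cons]
    split <;> omega
  omega

lemma rr_concat_le {w : List Bool} {b : Bool} {t : ℕ} (h : t ≤ w.length) :
    rr (w.concat b) t = rr w t := by
  simp [rr, List.concat_eq_append, List.take_append_of_le_length h]

lemma count_concat_false (w : List Bool) (b : Bool) :
    ((w.concat b).count false : ℤ) = (w.count false : ℤ) + dB b := by
  cases b <;> simp [List.concat_eq_append, List.count_append, dB, List.count_singleton]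

lemma concat_inj {l₁ l₂ : List Bool} {a b : Bool} (h : l₁.concat a = l₂.concat b) :
    l₁ = l₂ ∧ a = b := by
  have h' : l₁ ++ [a] = l₂ ++ [b] := by simpa [List.concat_eq_append] using h
  have := List.append_inj' h' rfl
  exact ⟨this.1, by simpa using this.2⟩


lemma nested_concat {w₁ w₂ w₃ : List Bool} {b₁ b₂ b₃ : Bool}
    (h₁ : w₁.length = n) (h₂ : w₂.length = n) (h₃ : w₃.length = n) :
    Nested (w₁.concat b₁) (w₂.concat b₂) (w₃.concat b₃) ↔
      Nested w₁ w₂ w₃ ∧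
        ((w₁.concat b₁).count false ≤ (w₂.concat b₂).count false ∧
         (w₂.concat b₂).count false ≤ (w₃.concat b₃).count false) := by
  constructor
  · intro h
    refine ⟨fun t => ?_, ?_⟩
    · rcases le_or_gt t n with ht | ht
      · have := h t
        rwa [rr_concat_le (h₁ ▸ ht), rr_concat_le (h₂ ▸ ht), rr_concat_le (h₃ ▸ ht)] at this
      · have := h n
        rw [rr_concat_le h₁.ge, rr_concat_le h₂.ge, rr_concat_le h₃.ge,
          rr_of_length_le h₁.le, rr_of_length_le h₂.le, rr_of_length_le h₃.le] at this
        rw [rr_of_length_le (by omega), rr_of_length_le (by omega),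
          rr_of_length_le (by omega)]
        exact this
    · have := h (n+1)
      rwa [rr_of_length_le (by simp [h₁]), rr_of_length_le (by simp [h₂]),
        rr_of_length_le (by simp [h₃])] at this
  · rintro ⟨hN, hc₁, hc₂⟩ t
    rcases le_or_gt t n with ht | ht
    · rw [rr_concat_le (h₁ ▸ ht), rr_concat_le (h₂ ▸ ht), rr_concat_le (h₃ ▸ ht)]
      exact hN t
    · rw [rr_of_length_le (by simp; omega), rr_of_length_le (by simp; omega),
        rr_of_length_le (by simp; omega)]
      exact ⟨hc₁, hc₂⟩

lemma mem_T (n : ℕ) (x : ℤ × ℤ × ℤ) (w : List Bool × List Bool × List Bool) :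
    w ∈ T n x ↔
      w.1.length = n ∧ w.2.1.length = n ∧ w.2.2.length = n ∧
      (w.1.count false : ℤ) = x.1 ∧ (w.2.1.count false : ℤ) = x.2.1 ∧
      (w.2.2.count false : ℤ) = x.2.2 ∧ Nested w.1 w.2.1 w.2.2 := by
  induction n generalizing x w with
  | zero =>
    rw [T]
    split
    · rename_i hx
      subst hx
      simp only [Finset.mem_singleton]
      constructor
      · rintro rfl
        refine ⟨rfl, rfl, rfl, by simp, by simp, by simp, fun t => by simp [rr]⟩
      · rintro ⟨h1, h2, h3, -⟩
        obtain ⟨w1, w2, w3⟩ := w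
        simp only at h1 h2 h3 ⊢
        rw [List.length_eq_zero_iff] at h1 h2 h3
        simp [h1, h2, h3]
    · rename_i hx
      simp only [Finset.notMem_empty, false_iff]
      rintro ⟨h1, h2, h3, e1, e2, e3, -⟩
      rw [List.length_eq_zero_iff] at h1 h2 h3
      apply hx
      obtain ⟨x1, x2, x3⟩ := x
      simp only [h1, h2, h3, List.count_nil] at e1 e2 e3
      simp [← e1, ← e2, ← e3]
  | succ n ih =>
    rw [T]
    split
    · rename_i hord
      simp only [Finset.mem_biUnion, Finset.mem_univ, Finset.mem_image, true_and]
      constructor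
      · rintro ⟨b, v, hv, rfl⟩
        rw [ih] at hv
        obtain ⟨l1, l2, l3, e1, e2, e3, hN⟩ := hv
        have c1 := count_concat_false v.1 b.1
        have c2 := count_concat_false v.2.1 b.2.1
        have c3 := count_concat_false v.2.2 b.2.2
        refine ⟨by simp [l1], by simp [l2], by simp [l3], by rw [c1, e1]; ring,
          by rw [c2, e2]; ring, by rw [c3, e3]; ring, ?_⟩
        rw [nested_concat l1 l2 l3]
        refine ⟨hN, ?_, ?_⟩
        · have : ((v.1.concat b.1).count false : ℤ) ≤ ((v.2.1.concat b.2.1).count false : ℤ) := by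
            rw [c1, c2, e1, e2]
            have := hord.1
            simp only [dB]
            split <;> split <;> omega
          exact_mod_cast this
        · have : ((v.2.1.concat b.2.1).count false : ℤ) ≤ ((v.2.2.concat b.2.2).count false : ℤ) := by
            rw [c2, c3, e2, e3]
            have := hord.2
            simp only [dB]
            split <;> split <;> omega
          exact_mod_cast this
      · rintro ⟨h1, h2, h3, e1, e2, e3, hN⟩
        obtain ⟨w1, w2, w3⟩ := w
        simp only at h1 h2 h3 e1 e2 e3 hN ⊢
        have ne1 : w1 ≠ [] := by intro h; rw [h] at h1; simp at h1
        have ne2 : w2 ≠ [] := by intro h; rw [h] at h2; simp at h2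
        have ne3 : w3 ≠ [] := by intro h; rw [h] at h3; simp at h3
        set b1 := w1.getLast ne1
        set b2 := w2.getLast ne2
        set b3 := w3.getLast ne3
        have d1 : w1.dropLast.concat b1 = w1 := by
          simp [List.concat_eq_append, List.dropLast_append_getLast ne1, b1]
        have d2 : w2.dropLast.concat b2 = w2 := by
          simp [List.concat_eq_append, List.dropLast_append_getLast ne2, b2]
        have d3 : w3.dropLast.concat b3 = w3 := by
          simp [List.concat_eq_append, List.dropLast_append_getLast ne3, b3]
        have l1 : w1.dropLast.length = n := by simp [List.length_dropLast, h1]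
        have l2 : w2.dropLast.length = n := by simp [List.length_dropLast, h2]
        have l3 : w3.dropLast.length = n := by simp [List.length_dropLast, h3]
        refine ⟨(b1, b2, b3), (w1.dropLast, w2.dropLast, w3.dropLast), ?_,
          by simp only [Prod.mk.injEq]; exact ⟨d1, d2, d3⟩⟩
        rw [ih]
        dsimp only
        have c1 := count_concat_false w1.dropLast b1
        have c2 := count_concat_false w2.dropLast b2
        have c3 := count_concat_false w3.dropLast b3
        rw [d1] at c1; rw [d2] at c2; rw [d3] at c3
        have hN' : Nested w1.dropLast w2.dropLast w3.dropLast := by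
          rw [← d1, ← d2, ← d3] at hN
          exact ((nested_concat l1 l2 l3).1 hN).1
        exact ⟨l1, l2, l3, by rw [c1] at e1; omega, by rw [c2] at e2; omega,
          by rw [c3] at e3; omega, hN'⟩
    · rename_i hord
      simp only [Finset.notMem_empty, false_iff]
      rintro ⟨h1, h2, h3, e1, e2, e3, hN⟩
      apply hord
      have := hN (n+1)
      rw [rr_of_length_le (le_of_eq h1), rr_of_length_le (le_of_eq h2),
        rr_of_length_le (le_of_eq h3)] at this
      constructor
      · rw [← e1, ← e2]; exact_mod_cast this.1
      · rw [← e2, ← e3]; exact_mod_cast this.2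


lemma concat_map_injective (b : Bool × Bool × Bool) :
    Function.Injective (fun w : List Bool × List Bool × List Bool =>
      (w.1.concat b.1, w.2.1.concat b.2.1, w.2.2.concat b.2.2)) := by
  rintro ⟨a1, a2, a3⟩ ⟨c1, c2, c3⟩ h
  simp only [Prod.mk.injEq] at h ⊢
  exact ⟨(concat_inj h.1).1, (concat_inj h.2.1).1, (concat_inj h.2.2).1⟩

lemma card_T_succ (n : ℕ) (x : ℤ × ℤ × ℤ) (hord : x.1 ≤ x.2.1 ∧ x.2.1 ≤ x.2.2) :
    (T (n+1) x).card =
      ∑ b : Bool × Bool × Bool,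
        (T n (x.1 - dB b.1, x.2.1 - dB b.2.1, x.2.2 - dB b.2.2)).card := by
  rw [T, if_pos hord, Finset.card_biUnion]
  · refine Finset.sum_congr rfl fun b _ => ?_
    exact Finset.card_image_of_injective _ (concat_map_injective b)
  · rintro b - b' - hbb
    rw [Function.onFun, Finset.disjoint_left]
    rintro w hw hw'
    simp only [Finset.mem_image] at hw hw'
    obtain ⟨v, -, rfl⟩ := hw
    obtain ⟨v', -, h⟩ := hw'
    simp only [Prod.mk.injEq] at h
    exact hbb (by
      obtain ⟨b1, b2, b3⟩ := b
      obtain ⟨b1', b2', b3'⟩ := b'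
      simp only [Prod.mk.injEq]
      exact ⟨(concat_inj h.1).2.symm, (concat_inj h.2.1).2.symm, (concat_inj h.2.2).2.symm⟩)

lemma c_pascal (n : ℕ) (k : ℤ) : c (n+1) k = c n k + c n (k-1) := by
  unfold c
  rcases lt_trichotomy k 0 with hk | hk | hk
  · rw [if_neg (by omega), if_neg (by omega), if_neg (by omega)]; ring
  · subst hk
    norm_num [Nat.choose_zero_right]
  · rw [if_pos (by omega), if_pos (by omega), if_pos (by omega)]
    obtain ⟨m, rfl⟩ : ∃ m : ℕ, k = (m : ℤ) + 1 := ⟨(k-1).toNat, by omega⟩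
    have h1 : ((m : ℤ) + 1).toNat = m + 1 := by omega
    have h2 : ((m : ℤ) + 1 - 1).toNat = m := by omega
    rw [h1, h2, Nat.choose_succ_succ]
    push_cast
    ring

@[simp] lemma dB_false : dB false = 1 := rfl
@[simp] lemma dB_true : dB true = 0 := rfl

lemma D_succ (n : ℕ) (x : ℤ × ℤ × ℤ) :
    D (n+1) x = ∑ b : Bool × Bool × Bool,
      D n (x.1 - dB b.1, x.2.1 - dB b.2.1, x.2.2 - dB b.2.2) := by
  obtain ⟨x1, x2, x3⟩ := x
  simp only [Fintype.sum_prod_type, Fintype.sum_bool, dB_false, dB_true, sub_zero]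
  simp only [D, c_pascal]
  ring


lemma D_eq_zero_12 (n : ℕ) {x1 x2 x3 : ℤ} (h : x1 = x2 + 1) : D n (x1, x2, x3) = 0 := by
  subst h
  simp only [D]
  ring_nf

lemma D_eq_zero_23 (n : ℕ) {x1 x2 x3 : ℤ} (h : x2 = x3 + 1) : D n (x1, x2, x3) = 0 := by
  subst h
  simp only [D]
  ring_nf

lemma c_zero (k : ℤ) : c 0 k = if k = 0 then 1 else 0 := by
  unfold c
  rcases lt_trichotomy k 0 with hk | hk | hk
  · rw [if_neg (by omega), if_neg (by omega)]
  · subst hk; norm_num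
  · rw [if_pos (by omega), if_neg (by omega)]
    rw [Nat.choose_eq_zero_of_lt (by omega)]
    norm_num

set_option maxHeartbeats 3200000 in
lemma D_zero {x1 x2 x3 : ℤ} (h1 : x1 ≤ x2 + 1) (h2 : x2 ≤ x3 + 1) :
    D 0 (x1, x2, x3) = if (x1, x2, x3) = ((0 : ℤ), (0 : ℤ), (0 : ℤ)) then 1 else 0 := by
  simp only [D, c_zero, Prod.mk.injEq]
  split_ifs <;> omega

theorem card_T_eq_D (n : ℕ) (x : ℤ × ℤ × ℤ) (h1 : x.1 ≤ x.2.1 + 1) (h2 : x.2.1 ≤ x.2.2 + 1) :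
    ((T n x).card : ℤ) = D n x := by
  induction n generalizing x with
  | zero =>
    obtain ⟨x1, x2, x3⟩ := x
    rw [T, D_zero h1 h2]
    split <;> simp
  | succ n ih =>
    obtain ⟨x1, x2, x3⟩ := x
    by_cases hord : x1 ≤ x2 ∧ x2 ≤ x3
    · rw [card_T_succ n _ hord, D_succ]
      push_cast
      refine Finset.sum_congr rfl fun b _ => ?_
      refine ih _ ?_ ?_ <;> obtain ⟨b1, b2, b3⟩ := b <;> simp only at h1 h2 hord ⊢ <;>
        cases b1 <;> cases b2 <;> cases b3 <;> simp only [dB_false, dB_true] <;> omega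
    · rw [T, if_neg hord]
      simp only at hord h1 h2
      rcases (by omega : x1 = x2 + 1 ∨ x2 = x3 + 1) with h | h
      · rw [D_eq_zero_12 (n+1) h]; simp
      · rw [D_eq_zero_23 (n+1) h]; simp

lemma take_count_sum {w : List Bool} {t : ℕ} (h : t ≤ w.length) :
    (w.take t).count false + (w.take t).count true = t := by
  rw [count_false_add_count_true, List.length_take]
  omega

lemma visited_disjoint {A B : ℤ × ℤ} (hS : A.1 + A.2 = B.1 + B.2) (w1 w2 : List Bool) :
    visited A w1 ∩ visited B w2 = ∅ ↔
      ∀ t, t ≤ w1.length → t ≤ w2.length →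
        A.1 + ((w1.take t).count false : ℤ) ≠ B.1 + ((w2.take t).count false : ℤ) := by
  unfold visited
  rw [Set.eq_empty_iff_forall_notMem]
  simp only [Set.mem_inter_iff, Set.mem_setOf_eq]
  constructor
  · intro h t ht1 ht2 heq
    apply h (A.1 + ((w1.take t).count false : ℤ), A.2 + ((w1.take t).count true : ℤ))
    refine ⟨⟨t, ht1, rfl⟩, ⟨t, ht2, ?_⟩⟩
    have s1 := take_count_sum ht1
    have s2 := take_count_sum ht2
    have : A.2 + ((w1.take t).count true : ℤ) = B.2 + ((w2.take t).count true : ℤ) := by omega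
    rw [heq, this]
  · rintro h p ⟨⟨t1, ht1, hp1⟩, ⟨t2, ht2, hp2⟩⟩
    have s1 := take_count_sum ht1
    have s2 := take_count_sum ht2
    rw [hp1] at hp2
    rw [Prod.mk.injEq] at hp2
    obtain ⟨e1, e2⟩ := hp2
    have htt : t1 = t2 := by omega
    subst htt
    exact h t1 ht1 ht2 e1

lemma ivt {n : ℕ} (d : ℕ → ℤ) (h0 : d 0 ≤ 0) (hstep : ∀ t, d (t+1) ≤ d t + 1)
    (hne : ∀ t ≤ n, d t ≠ 1) : ∀ t ≤ n, d t ≤ 0 := by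
  intro t
  induction t with
  | zero => intro _; exact h0
  | succ t iht =>
    intro ht
    have h1 := iht (by omega)
    have h2 := hstep t
    have h3 := hne (t+1) ht
    omega

lemma ne_iff_le {n : ℕ} {w1 w2 : List Bool} (h1 : w1.length = n) (h2 : w2.length = n)
    (hc : w1.count false = w2.count false) :
    (∀ t ≤ n, ((rr w1 t : ℤ)) ≠ (rr w2 t : ℤ) + 1) ↔ ∀ t, rr w1 t ≤ rr w2 t := by
  constructor
  · intro h t
    rcases le_or_gt t n with ht | ht
    · have := ivt (fun t => (rr w1 t : ℤ) - (rr w2 t : ℤ)) (by simp [rr_zero])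
        (fun t => by
          have a1 := rr_succ_le w1 t
          have a2 := rr_le_succ w2 t
          omega)
        (fun t ht => by
          have := h t ht
          omega) t ht
      omega
    · rw [rr_of_length_le (by omega), rr_of_length_le (by omega), hc]
  · intro h t _
    have := h t
    omega

lemma c_coe (n k : ℕ) : c n (k : ℤ) = (n.choose k : ℤ) := by simp [c]

lemma c_neg {n : ℕ} {k : ℤ} (h : k < 0) : c n k = 0 := by
  unfold c
  rw [if_neg (by omega)]

lemma fne (m : ℕ) : (m.factorial : ℚ) ≠ 0 := Nat.cast_ne_zero.mpr m.factorial_ne_zero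

-- test case i = 0
lemma val_i0 (j : ℕ) :
    ((D (0+j) (((0:ℕ):ℤ), ((0:ℕ):ℤ), ((0:ℕ):ℤ)) : ℤ) : ℚ) =
      2 * (Nat.factorial (0+j) : ℚ) * (Nat.factorial (0+j+1)) * (Nat.factorial (0+j+2)) /
        ((Nat.factorial 0) * (Nat.factorial (0+1)) * (Nat.factorial (0+2)) *
         (Nat.factorial j) * (Nat.factorial (j+1)) * (Nat.factorial (j+2))) := by
  have hD : D (0+j) (((0:ℕ):ℤ), ((0:ℕ):ℤ), ((0:ℕ):ℤ)) = 1 := by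
    norm_num [D, c]
  rw [hD]
  rw [eq_div_iff (by positivity)]
  norm_num [Nat.factorial]

lemma fsucc (k : ℕ) : ((k+1).factorial : ℚ) = (k+1) * k.factorial := by
  rw [Nat.factorial_succ]; push_cast; ring

-- general case i = a+2, j = b+2
set_option maxHeartbeats 1000000 in
lemma val_gen (a b : ℕ) :
    ((D ((a+2)+(b+2)) (((a+2:ℕ):ℤ), ((a+2:ℕ):ℤ), ((a+2:ℕ):ℤ)) : ℤ) : ℚ) =
      2 * (Nat.factorial ((a+2)+(b+2)) : ℚ) * (Nat.factorial ((a+2)+(b+2)+1)) *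
          (Nat.factorial ((a+2)+(b+2)+2)) /
        ((Nat.factorial (a+2)) * (Nat.factorial ((a+2)+1)) * (Nat.factorial ((a+2)+2)) *
         (Nat.factorial (b+2)) * (Nat.factorial ((b+2)+1)) * (Nat.factorial ((b+2)+2))) := by
  have hn : a+2+(b+2) = a+b+4 := by omega
  rw [hn]
  simp only [D]
  rw [show ((a+2:ℕ):ℤ)+1 = ((a+3:ℕ):ℤ) from by push_cast; ring,
      show ((a+2:ℕ):ℤ)+2 = ((a+4:ℕ):ℤ) from by push_cast; ring,
      show ((a+2:ℕ):ℤ)-1 = ((a+1:ℕ):ℤ) from by push_cast; ring,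
      show ((a+2:ℕ):ℤ)-2 = ((a:ℕ):ℤ) from by push_cast; ring]
  simp only [c_coe]
  push_cast
  have n3 : ((a:ℚ)+3) ≠ 0 := by positivity
  have n4 : ((a:ℚ)+4) ≠ 0 := by positivity
  have m3 : ((b:ℚ)+3) ≠ 0 := by positivity
  have m4 : ((b:ℚ)+4) ≠ 0 := by positivity
  have r3 : (((a+b+4).choose (a+3) : ℕ) : ℚ) =
      ((a+b+4).choose (a+2) : ℚ) * ((b:ℚ)+2) / ((a:ℚ)+3) := by
    rw [eq_div_iff n3]
    have h := Nat.choose_succ_right_eq (a+b+4) (a+2)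
    rw [show a+b+4-(a+2) = b+2 from by omega] at h
    exact_mod_cast h
  have r4 : (((a+b+4).choose (a+4) : ℕ) : ℚ) =
      ((a+b+4).choose (a+3) : ℚ) * ((b:ℚ)+1) / ((a:ℚ)+4) := by
    rw [eq_div_iff n4]
    have h := Nat.choose_succ_right_eq (a+b+4) (a+3)
    rw [show a+b+4-(a+3) = b+1 from by omega] at h
    exact_mod_cast h
  have r1 : (((a+b+4).choose (a+1) : ℕ) : ℚ) =
      ((a+b+4).choose (a+2) : ℚ) * ((a:ℚ)+2) / ((b:ℚ)+3) := by
    rw [eq_div_iff m3]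
    have h := Nat.choose_succ_right_eq (a+b+4) (a+1)
    rw [show a+b+4-(a+1) = b+3 from by omega] at h
    have h' : ((a+b+4).choose (a+2) : ℚ) * ((a:ℚ)+2) = ((a+b+4).choose (a+1) : ℚ) * ((b:ℚ)+3) := by
      exact_mod_cast h
    linarith
  have r0 : (((a+b+4).choose a : ℕ) : ℚ) =
      ((a+b+4).choose (a+1) : ℚ) * ((a:ℚ)+1) / ((b:ℚ)+4) := by
    rw [eq_div_iff m4]
    have h := Nat.choose_succ_right_eq (a+b+4) a
    rw [show a+b+4-a = b+4 from by omega] at h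
    have h' : ((a+b+4).choose (a+1) : ℚ) * ((a:ℚ)+1) = ((a+b+4).choose a : ℚ) * ((b:ℚ)+4) := by
      exact_mod_cast h
    linarith
  rw [r4, r3, r0, r1]
  have hc : (((a+b+4).choose (a+2) : ℕ) : ℚ) =
      ((a+b+4).factorial : ℚ) / ((a+2).factorial * (b+2).factorial) := by
    rw [Nat.cast_choose ℚ (show a+2 ≤ a+b+4 by omega),
      show a+b+4-(a+2) = b+2 from by omega]
  rw [hc]
  rw [fsucc (a+b+4+1), fsucc (a+b+4), fsucc (a+2+1), fsucc (a+2), fsucc (b+2+1), fsucc (b+2)]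
  push_cast
  have p1 : ((a:ℚ)+(b:ℚ)+5) ≠ 0 := by positivity
  have p2 : ((a:ℚ)+(b:ℚ)+6) ≠ 0 := by positivity
  have n1 : ((a:ℚ)+1) ≠ 0 := by positivity
  have n2 : ((a:ℚ)+2) ≠ 0 := by positivity
  have m1 : ((b:ℚ)+1) ≠ 0 := by positivity
  have m2 : ((b:ℚ)+2) ≠ 0 := by positivity
  field_simp [fne (a+2), fne (b+2), fne (a+b+4)]
  ring

lemma val_j0 (i : ℕ) :
    ((D (i+0) (((i:ℕ):ℤ), ((i:ℕ):ℤ), ((i:ℕ):ℤ)) : ℤ) : ℚ) =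
      2 * (Nat.factorial (i+0) : ℚ) * (Nat.factorial (i+0+1)) * (Nat.factorial (i+0+2)) /
        ((Nat.factorial i) * (Nat.factorial (i+1)) * (Nat.factorial (i+2)) *
         (Nat.factorial 0) * (Nat.factorial (0+1)) * (Nat.factorial (0+2))) := by
  have hD : D (i+0) (((i:ℕ):ℤ), ((i:ℕ):ℤ), ((i:ℕ):ℤ)) = 1 := by
    simp only [D]
    have z1 : c (i+0) ((i:ℤ)+1) = 0 := by
      unfold c
      rw [if_pos (by omega), show ((i:ℤ)+1).toNat = i+1 from by omega,
        Nat.choose_eq_zero_of_lt (by omega)]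
      rfl
    have z2 : c (i+0) ((i:ℤ)+2) = 0 := by
      unfold c
      rw [if_pos (by omega), show ((i:ℤ)+2).toNat = i+2 from by omega,
        Nat.choose_eq_zero_of_lt (by omega)]
      rfl
    have o : c (i+0) ((i:ℤ)) = 1 := by
      rw [c_coe]
      norm_num [Nat.choose_self]
    rw [z1, z2, o]
    ring
  rw [hD, eq_div_iff (by positivity)]
  norm_num [Nat.factorial]
  ring

lemma val_11 :
    ((D (1+1) (((1:ℕ):ℤ), ((1:ℕ):ℤ), ((1:ℕ):ℤ)) : ℤ) : ℚ) =
      2 * (Nat.factorial (1+1) : ℚ) * (Nat.factorial (1+1+1)) * (Nat.factorial (1+1+2)) /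
        ((Nat.factorial 1) * (Nat.factorial (1+1)) * (Nat.factorial (1+2)) *
         (Nat.factorial 1) * (Nat.factorial (1+1)) * (Nat.factorial (1+2))) := by
  have hD : D (1+1) (((1:ℕ):ℤ), ((1:ℕ):ℤ), ((1:ℕ):ℤ)) = 4 := by decide
  rw [hD]
  norm_num [Nat.factorial]

set_option maxHeartbeats 1000000 in
lemma val_i1 (b : ℕ) :
    ((D (1+(b+2)) (((1:ℕ):ℤ), ((1:ℕ):ℤ), ((1:ℕ):ℤ)) : ℤ) : ℚ) =
      2 * (Nat.factorial (1+(b+2)) : ℚ) * (Nat.factorial (1+(b+2)+1)) *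
          (Nat.factorial (1+(b+2)+2)) /
        ((Nat.factorial 1) * (Nat.factorial (1+1)) * (Nat.factorial (1+2)) *
         (Nat.factorial (b+2)) * (Nat.factorial ((b+2)+1)) * (Nat.factorial ((b+2)+2))) := by
  have hn : 1+(b+2) = b+3 := by omega
  rw [hn]
  simp only [D]
  rw [show ((1:ℕ):ℤ)+1 = ((2:ℕ):ℤ) from by norm_num,
      show ((1:ℕ):ℤ)+2 = ((3:ℕ):ℤ) from by norm_num,
      show ((1:ℕ):ℤ)-1 = ((0:ℕ):ℤ) from by norm_num,
      show ((1:ℕ):ℤ)-2 = (-1:ℤ) from by norm_num,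
      show c (b+3) (-1:ℤ) = 0 from c_neg (by norm_num)]
  simp only [c_coe]
  push_cast
  have hc0 : (b+3).choose 0 = 1 := Nat.choose_zero_right _
  have hc1 : (b+3).choose 1 = b+3 := Nat.choose_one_right _
  have hc2 : (((b+3).choose 2 : ℕ) : ℚ) = ((b:ℚ)+3)*((b:ℚ)+2)/2 := by
    rw [eq_div_iff (by norm_num : (2:ℚ) ≠ 0)]
    have h := Nat.choose_succ_right_eq (b+3) 1
    rw [show b+3-1 = b+2 from by omega, hc1] at h
    exact_mod_cast h
  have hc3 : (((b+3).choose 3 : ℕ) : ℚ) = (((b+3).choose 2 : ℕ) : ℚ)*((b:ℚ)+1)/3 := by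
    rw [eq_div_iff (by norm_num : (3:ℚ) ≠ 0)]
    have h := Nat.choose_succ_right_eq (b+3) 2
    rw [show b+3-2 = b+1 from by omega] at h
    exact_mod_cast h
  rw [hc3, hc2, hc1, hc0]
  rw [fsucc (b+3+1), fsucc (b+3), fsucc (b+2)]
  push_cast
  norm_num [Nat.factorial]
  field_simp [fne (b+2)]
  ring

set_option maxHeartbeats 1000000 in
lemma val_j1 (a : ℕ) :
    ((D ((a+2)+1) (((a+2:ℕ):ℤ), ((a+2:ℕ):ℤ), ((a+2:ℕ):ℤ)) : ℤ) : ℚ) =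
      2 * (Nat.factorial ((a+2)+1) : ℚ) * (Nat.factorial ((a+2)+1+1)) *
          (Nat.factorial ((a+2)+1+2)) /
        ((Nat.factorial (a+2)) * (Nat.factorial ((a+2)+1)) * (Nat.factorial ((a+2)+2)) *
         (Nat.factorial 1) * (Nat.factorial (1+1)) * (Nat.factorial (1+2))) := by
  have hn : a+2+1 = a+3 := by omega
  rw [hn]
  simp only [D]
  rw [show ((a+2:ℕ):ℤ)+1 = ((a+3:ℕ):ℤ) from by push_cast; ring,
      show ((a+2:ℕ):ℤ)+2 = ((a+4:ℕ):ℤ) from by push_cast; ring,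
      show ((a+2:ℕ):ℤ)-1 = ((a+1:ℕ):ℤ) from by push_cast; ring,
      show ((a+2:ℕ):ℤ)-2 = ((a:ℕ):ℤ) from by push_cast; ring]
  simp only [c_coe]
  push_cast
  have hz : (a+3).choose (a+4) = 0 := Nat.choose_eq_zero_of_lt (by omega)
  have hcs : (a+3).choose (a+3) = 1 := Nat.choose_self _
  have hc2 : (a+3).choose (a+2) = a+3 := Nat.choose_succ_self_right _
  have hc1 : (((a+3).choose (a+1) : ℕ) : ℚ) = ((a:ℚ)+3)*((a:ℚ)+2)/2 := by
    rw [eq_div_iff (by norm_num : (2:ℚ) ≠ 0)]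
    have h := Nat.choose_succ_right_eq (a+3) (a+1)
    rw [show a+3-(a+1) = 2 from by omega, hc2] at h
    exact_mod_cast h.symm
  have hc0 : (((a+3).choose a : ℕ) : ℚ) = (((a+3).choose (a+1) : ℕ) : ℚ)*((a:ℚ)+1)/3 := by
    rw [eq_div_iff (by norm_num : (3:ℚ) ≠ 0)]
    have h := Nat.choose_succ_right_eq (a+3) a
    rw [show a+3-a = 3 from by omega] at h
    exact_mod_cast h.symm
  rw [hz, hcs, hc0, hc1, hc2]
  rw [fsucc (a+3+1), fsucc (a+3), fsucc (a+2)]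
  push_cast
  norm_num [Nat.factorial]
  field_simp [fne (a+2)]
  ring

lemma D_value (i j : ℕ) :
    ((D (i+j) ((i:ℤ), (i:ℤ), (i:ℤ)) : ℤ) : ℚ) =
      2 * (Nat.factorial (i+j) : ℚ) * (Nat.factorial (i+j+1)) * (Nat.factorial (i+j+2)) /
        ((Nat.factorial i) * (Nat.factorial (i+1)) * (Nat.factorial (i+2)) *
         (Nat.factorial j) * (Nat.factorial (j+1)) * (Nat.factorial (j+2))) := by
  rcases i with _ | _ | a
  · exact val_i0 j
  · rcases j with _ | _ | b
    · exact val_j0 1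
    · exact val_11
    · exact val_i1 b
  · rcases j with _ | _ | b
    · exact val_j0 (a+2)
    · exact val_j1 a
    · exact val_gen a b


lemma set_eq (i j : ℕ) :
    {T : List Bool × List Bool × List Bool |
        T.1.count false = i ∧ T.1.count true = j ∧
        T.2.1.count false = i ∧ T.2.1.count true = j ∧
        T.2.2.count false = i ∧ T.2.2.count true = j ∧
        visited ((-1 : ℤ), (1 : ℤ)) T.1 ∩ visited ((0 : ℤ), (0 : ℤ)) T.2.1 = ∅ ∧
        visited ((-1 : ℤ), (1 : ℤ)) T.1 ∩ visited ((1 : ℤ), (-1 : ℤ)) T.2.2 = ∅ ∧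
        visited ((0 : ℤ), (0 : ℤ)) T.2.1 ∩ visited ((1 : ℤ), (-1 : ℤ)) T.2.2 = ∅} =
      ↑(T (i+j) ((i:ℤ), (i:ℤ), (i:ℤ))) := by
  ext ⟨w1, w2, w3⟩
  simp only [Set.mem_setOf_eq, Finset.mem_coe, mem_T]
  constructor
  · rintro ⟨cf1, ct1, cf2, ct2, cf3, ct3, d12, d13, d23⟩
    have l1 : w1.length = i + j := by rw [← count_false_add_count_true, cf1, ct1]
    have l2 : w2.length = i + j := by rw [← count_false_add_count_true, cf2, ct2]
    have l3 : w3.length = i + j := by rw [← count_false_add_count_true, cf3, ct3]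
    have h12 : ∀ t, rr w1 t ≤ rr w2 t := by
      rw [← ne_iff_le l1 l2 (cf1.trans cf2.symm)]
      intro t ht heq
      rw [visited_disjoint (by norm_num)] at d12
      refine d12 t (by omega) (by omega) ?_
      show (-1 : ℤ) + _ = (0 : ℤ) + _
      unfold rr at heq
      omega
    have h23 : ∀ t, rr w2 t ≤ rr w3 t := by
      rw [← ne_iff_le l2 l3 (cf2.trans cf3.symm)]
      intro t ht heq
      rw [visited_disjoint (by norm_num)] at d23
      refine d23 t (by omega) (by omega) ?_
      show (0 : ℤ) + _ = (1 : ℤ) + _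
      unfold rr at heq
      omega
    exact ⟨l1, l2, l3, by rw [cf1], by rw [cf2], by rw [cf3], fun t => ⟨h12 t, h23 t⟩⟩
  · rintro ⟨l1, l2, l3, e1, e2, e3, hN⟩
    have cf1 : w1.count false = i := by exact_mod_cast e1
    have cf2 : w2.count false = i := by exact_mod_cast e2
    have cf3 : w3.count false = i := by exact_mod_cast e3
    have s1 := count_false_add_count_true w1
    have s2 := count_false_add_count_true w2
    have s3 := count_false_add_count_true w3
    refine ⟨cf1, by omega, cf2, by omega, cf3, by omega, ?_, ?_, ?_⟩
    · rw [visited_disjoint (by norm_num)]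
      intro t ht1 ht2 heq
      have := (hN t).1
      unfold rr at this
      omega
    · rw [visited_disjoint (by norm_num)]
      intro t ht1 ht2 heq
      have h1 := (hN t).1
      have h2 := (hN t).2
      unfold rr at h1 h2
      omega
    · rw [visited_disjoint (by norm_num)]
      intro t ht1 ht2 heq
      have := (hN t).2
      unfold rr at this
      omega

end LGV3

/-- The number of triples of pairwise non-intersecting upright lattice paths from
`(-1,1)`, `(0,0)`, `(1,-1)` to `(i-1,j+1)`, `(i,j)`, `(i+1,j-1)` is Baxter's number
`2 (i+j)! (i+j+1)! (i+j+2)! / (i! (i+1)! (i+2)! j! (j+1)! (j+2)!)`. -/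
theorem count_nonintersecting_triples (i j : ℕ) :
    ({T : List Bool × List Bool × List Bool |
        T.1.count false = i ∧ T.1.count true = j ∧
        T.2.1.count false = i ∧ T.2.1.count true = j ∧
        T.2.2.count false = i ∧ T.2.2.count true = j ∧
        visited ((-1 : ℤ), (1 : ℤ)) T.1 ∩ visited ((0 : ℤ), (0 : ℤ)) T.2.1 = ∅ ∧
        visited ((-1 : ℤ), (1 : ℤ)) T.1 ∩ visited ((1 : ℤ), (-1 : ℤ)) T.2.2 = ∅ ∧
        visited ((0 : ℤ), (0 : ℤ)) T.2.1 ∩ visited ((1 : ℤ), (-1 : ℤ)) T.2.2 = ∅}.ncard : ℚ) =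
      2 * (Nat.factorial (i+j) : ℚ) * (Nat.factorial (i+j+1)) * (Nat.factorial (i+j+2)) /
        ((Nat.factorial i) * (Nat.factorial (i+1)) * (Nat.factorial (i+2)) *
         (Nat.factorial j) * (Nat.factorial (j+1)) * (Nat.factorial (j+2))) := by
  rw [LGV3.set_eq i j, Set.ncard_coe_finset, ← LGV3.D_value i j]
  have := LGV3.card_T_eq_D (i+j) ((i:ℤ), (i:ℤ), (i:ℤ)) (by simp) (by simp)
  exact_mod_cast congrArg (fun z : ℤ => (z : ℚ)) this
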